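/- For any graph G with at least two vertices, the quasi-maximal modules of G form a partition of V(G). -/

import Mathlib

open SimpleGraph

/-- The bull graph: vertices a,b,c,d,e = 0,1,2,3,4; edges ab,bc,cd,be,ce. -/
def bull : SimpleGraph (Fin 5) :=
  SimpleGraph.fromEdgeSet {s(0,1), s(1,2), s(2,3), s(1,4), s(2,4)}

/-- The house graph: complement of the path on five vertices. -/
def house : SimpleGraph (Fin 5) := (SimpleGraph.pathGraph 5)ᶜ

/-- `G` contains no induced subgraph isomorphic to `F`. -/
def FreeOf {V W : Type*} (G : SimpleGraph V) (F : SimpleGraph W) : Prop :=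
  ¬ ∃ f : W ↪ V, ∀ a b : W, G.Adj (f a) (f b) ↔ F.Adj a b

/-- A homogeneous set: every outside vertex is complete or anticomplete to it. -/
def IsHomogSet {V : Type*} (G : SimpleGraph V) (S : Set V) : Prop :=
  ∀ v ∉ S, (∀ s ∈ S, G.Adj v s) ∨ (∀ s ∈ S, ¬ G.Adj v s)

/-- A proper homogeneous set: at least two vertices and not all of `V`. -/
def IsProperHomogSet {V : Type*} (G : SimpleGraph V) (S : Set V) : Prop :=
  IsHomogSet G S ∧ S.Nontrivial ∧ S ≠ Set.univ

/-- A stable (independent) set. -/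
def IsStableSet {V : Type*} (G : SimpleGraph V) (S : Set V) : Prop :=
  S.Pairwise fun u v => ¬ G.Adj u v

/-- A module: a nonempty homogeneous set that overlaps no homogeneous set. -/
def IsModuleSet {V : Type*} (G : SimpleGraph V) (M : Set V) : Prop :=
  M.Nonempty ∧ IsHomogSet G M ∧
    ∀ S : Set V, IsHomogSet G S → S ⊆ M ∨ M ⊆ S ∨ S ∩ M = ∅

/-- A quasi-maximal module: a module, different from `V`, such that the only
module strictly containing it is `V`. -/
def IsQuasiMaxModule {V : Type*} (G : SimpleGraph V) (M : Set V) : Prop :=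
  IsModuleSet G M ∧ M ≠ Set.univ ∧
    ∀ S : Set V, IsModuleSet G S → M ⊂ S → S = Set.univ

/-- A clique cover: a partition of the vertex set into cliques. -/
def IsCliqueCover {V : Type*} (G : SimpleGraph V) (C : Set (Set V)) : Prop :=
  Setoid.IsPartition C ∧ ∀ Q ∈ C, G.IsClique Q

/-- `cc G`: the minimum number of cliques in a clique cover of `G`. -/
noncomputable def cliqueCoverNumber {V : Type*} (G : SimpleGraph V) : ℕ :=
  sInf {n | ∃ C : Set (Set V), IsCliqueCover G C ∧ C.ncard = n}

/-- `S` is complete to `T`: every vertex of `S` is adjacent to every vertex of `T`. -/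
def CompleteTo {V : Type*} (G : SimpleGraph V) (S T : Set V) : Prop :=
  ∀ s ∈ S, ∀ t ∈ T, G.Adj s t

/-- `S` is anticomplete to `T`: no vertex of `S` is adjacent to a vertex of `T`. -/
def AnticompleteTo {V : Type*} (G : SimpleGraph V) (S T : Set V) : Prop :=
  ∀ s ∈ S, ∀ t ∈ T, ¬ G.Adj s t

/-- The 5-tuple setup from the paper: five nonempty pairwise disjoint sets
`A 0, …, A 4` (corresponding to `A_1, …, A_5`, indices modulo 5) with
`A i` complete to `A (i+1)` for `i ∈ {0,1,2,3}`, `A i` anticomplete to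
`A (i+2)` for all `i`, and `A 4` complete or anticomplete to `A 0`. -/
def GoodTuple {V : Type*} (G : SimpleGraph V) (A : Fin 5 → Set V) : Prop :=
  (∀ i, (A i).Nonempty) ∧
  (Pairwise fun i j => Disjoint (A i) (A j)) ∧
  (∀ i : Fin 5, i ≠ 4 → CompleteTo G (A i) (A (i + 1))) ∧
  (∀ i : Fin 5, AnticompleteTo G (A i) (A (i + 2))) ∧
  (CompleteTo G (A 4) (A 0) ∨ AnticompleteTo G (A 4) (A 0))

/-- A good tuple whose union `A` is inclusionwise maximal among all good tuples. -/
def MaximalGoodTuple {V : Type*} (G : SimpleGraph V) (A : Fin 5 → Set V) : Prop :=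
  GoodTuple G A ∧ ∀ A' : Fin 5 → Set V, GoodTuple G A' → ¬ (⋃ i, A i) ⊂ (⋃ i, A' i)

/-- The set `B` of vertices outside `A` that are complete to `A`. -/
def Bset {V : Type*} (G : SimpleGraph V) (A : Fin 5 → Set V) : Set V :=
  {v | v ∉ (⋃ i, A i) ∧ ∀ a ∈ ⋃ i, A i, G.Adj v a}

/-- For any graph `G` with at least two vertices, the quasi-maximal
modules of `G` form a partition of `V(G)`. -/
theorem stmt4 {V : Type*} [Fintype V] (G : SimpleGraph V) (h : 1 < Fintype.card V) :
    Setoid.IsPartition {M : Set V | IsQuasiMaxModule G M} := by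

  haveI : Nontrivial V := Fintype.one_lt_card_iff_nontrivial.mp h
  constructor
  · intro hmem
    exact hmem.1.1.ne_empty rfl
  · intro v
    set T : Set (Set V) := {M | IsModuleSet G M ∧ v ∈ M ∧ M ≠ Set.univ} with hT
    have hsing : ({v} : Set V) ∈ T := by
      refine ⟨⟨⟨v, rfl⟩, ?_, ?_⟩, rfl, ?_⟩
      · intro w hw
        by_cases hadj : G.Adj w v
        · exact Or.inl fun s hs => hs ▸ hadj
        · exact Or.inr fun s hs => hs ▸ hadj
      · intro S _
        by_cases hv : v ∈ S
        · exact Or.inr (Or.inl (Set.singleton_subset_iff.mpr hv))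
        · refine Or.inr (Or.inr ?_)
          ext x
          simp only [Set.mem_inter_iff, Set.mem_singleton_iff, Set.mem_empty_iff_false,
            iff_false, not_and]
          rintro hx rfl; exact hv hx
      · intro heq
        obtain ⟨w, hw⟩ := exists_ne v
        exact hw (heq ▸ Set.mem_univ w : w ∈ ({v} : Set V))
    obtain ⟨M, hM, hmax⟩ : ∃ M ∈ T, ∀ S ∈ T, M.ncard ≤ S.ncard → M.ncard = S.ncard := by
      obtain ⟨M, hM, hm⟩ := Set.exists_max_image T Set.ncard (Set.toFinite T) ⟨_, hsing⟩
      exact ⟨M, hM, fun S hS hle => le_antisymm hle (hm S hS)⟩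
    obtain ⟨hMmod, hvM, hMne⟩ := hM
    have hQM : IsQuasiMaxModule G M := by
      refine ⟨hMmod, hMne, ?_⟩
      intro S hS hMS
      by_contra hSuniv
      have hST : S ∈ T := ⟨hS, hMS.subset hvM, hSuniv⟩
      have hlt : M.ncard < S.ncard := Set.ncard_lt_ncard hMS (Set.toFinite S)
      exact absurd (hmax S hST hlt.le) hlt.ne
    refine ⟨M, ⟨hQM, hvM⟩, ?_⟩
    rintro N ⟨hNQ, hvN⟩
    obtain ⟨hNmod, hNne, hNmax⟩ := hNQ
    rcases hMmod.2.2 N hNmod.2.1 with hsub | hsub | hdisj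
    · rcases eq_or_ssubset_of_subset hsub with heq | hss
      · exact heq
      · exact absurd (hNmax M hMmod hss) hMne
    · rcases eq_or_ssubset_of_subset hsub with heq | hss
      · exact heq.symm
      · exact absurd (hQM.2.2 N hNmod hss) hNne
    · exact absurd hdisj (by simp only [Set.eq_empty_iff_forall_notMem]; intro hd; exact hd v ⟨hvN, hvM⟩)
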